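/- Let K₀ be a field finitely generated over its prime field, let E be an elliptic curve over K₀, let K₀^sep be a separable closure of K₀, and let σ ∈ Gal(K₀^sep/K₀); let σ_* be the induced ℂ-linear endomorphism of V = ℂ ⊗_ℤ E(K₀^sep). Let n be a positive integer and suppose that some primitive n-th root of unity λ ∈ ℂ is an eigenvalue of σ_*, i.e., there exists a nonzero v ∈ V with σ_* v = λ · v. Then the closed subgroup topologically generated by σ^n has index exactly n in the closed subgroup topologically generated by σ inside Gal(K₀^sep/K₀) with its Krull topology. -/

import Mathlib

open TensorProduct Pointwise

open scoped Classical in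
/-- The `ℂ`-linear endomorphism of `ℂ ⊗[ℤ] E(K₀^sep)` induced by the action of a Galois
automorphism `σ` on the points of the elliptic curve over the separable closure. -/
noncomputable def galoisStar (K₀ : Type) [Field K₀] (Ksep : Type) [Field Ksep]
    [Algebra K₀ Ksep] (W : WeierstrassCurve K₀) (σ : Ksep ≃ₐ[K₀] Ksep) :
    Module.End ℂ (ℂ ⊗[ℤ] (W.baseChange Ksep).toAffine.Point) :=
  LinearMap.baseChange ℂ
    (WeierstrassCurve.Affine.Point.map (W' := W.toAffine) σ.toAlgHom).toIntLinearMap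

section Aux

open scoped Classical

variable (K₀ : Type) [Field K₀] (Ksep : Type) [Field Ksep] [Algebra K₀ Ksep]
  (W : WeierstrassCurve K₀)

lemma galoisStar_mul_apply (σ τ : Ksep ≃ₐ[K₀] Ksep)
    (x : ℂ ⊗[ℤ] (W.baseChange Ksep).toAffine.Point) :
    galoisStar K₀ Ksep W (σ * τ) x =
      galoisStar K₀ Ksep W σ (galoisStar K₀ Ksep W τ x) := by
  induction x using TensorProduct.induction_on with
  | zero => simp
  | tmul c P =>
      simp only [galoisStar, LinearMap.baseChange_tmul, AddMonoidHom.coe_toIntLinearMap]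
      congr 1
      rw [WeierstrassCurve.Affine.Point.map_map]
      have h : (σ * τ).toAlgHom = σ.toAlgHom.comp τ.toAlgHom := by ext x; rfl
      rw [h]
  | add x y hx hy => simp [map_add, hx, hy]

lemma galoisStar_one_apply (x : ℂ ⊗[ℤ] (W.baseChange Ksep).toAffine.Point) :
    galoisStar K₀ Ksep W 1 x = x := by
  induction x using TensorProduct.induction_on with
  | zero => simp
  | tmul c P =>
      simp only [galoisStar, LinearMap.baseChange_tmul, AddMonoidHom.coe_toIntLinearMap]
      congr 1
      cases P <;> rfl
  | add x y hx hy => simp [map_add, hx, hy]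

lemma exists_fixing [Algebra.IsIntegral K₀ Ksep]
    (P : (W.baseChange Ksep).toAffine.Point) :
    ∃ E : IntermediateField K₀ Ksep, FiniteDimensional K₀ E ∧
      ∀ τ : Ksep ≃ₐ[K₀] Ksep, τ ∈ E.fixingSubgroup →
        WeierstrassCurve.Affine.Point.map (W' := W.toAffine) τ.toAlgHom P = P := by
  cases P with
  | zero => exact ⟨⊥, inferInstance, fun τ _ => rfl⟩
  | @some x y h =>
      have hfd : FiniteDimensional K₀ (IntermediateField.adjoin K₀ ({x, y} : Set Ksep)) :=
        IntermediateField.finiteDimensional_adjoin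
          (fun z _ => Algebra.IsIntegral.isIntegral z)
      refine ⟨IntermediateField.adjoin K₀ ({x, y} : Set Ksep), hfd, fun τ hτ => ?_⟩
      rw [IntermediateField.mem_fixingSubgroup_iff] at hτ
      have hx : τ x = x := hτ x (IntermediateField.subset_adjoin _ _ (by simp))
      have hy : τ y = y := hτ y (IntermediateField.subset_adjoin _ _ (by simp))
      rw [WeierstrassCurve.Affine.Point.map_some]
      simp only [WeierstrassCurve.Affine.Point.some.injEq]
      exact ⟨hx, hy⟩

end Aux

lemma closure_subset_mul_open {G : Type*} [Group G] [TopologicalSpace G] [IsTopologicalGroup G]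
    (A : Set G) (U : Subgroup G) (hU : IsOpen (U : Set G)) :
    closure A ⊆ A * (U : Set G) := by
  intro x hx
  have hxo : IsOpen (x • (U : Set G)) := hU.smul x
  have hxm : x ∈ x • (U : Set G) := ⟨1, U.one_mem, mul_one x⟩
  obtain ⟨a, hao, haA⟩ := mem_closure_iff.mp hx _ hxo hxm
  obtain ⟨u, hu, hux⟩ := hao
  exact ⟨a, haA, u⁻¹, U.inv_mem hu, by simp [← hux, smul_eq_mul, mul_assoc]⟩

open scoped Classical in
theorem stmt11 (K₀ : Type) [Field K₀]
    (hfg : ∃ s : Finset K₀, Subfield.closure (s : Set K₀) = ⊤)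
    (Ksep : Type) [Field Ksep] [Algebra K₀ Ksep] [IsSepClosure K₀ Ksep]
    (W : WeierstrassCurve K₀) (hΔ : W.Δ ≠ 0)
    (σ : Ksep ≃ₐ[K₀] Ksep) (n : ℕ) (hn : 0 < n)
    (lam : ℂ) (hlam : IsPrimitiveRoot lam n)
    (hev : ∃ v : ℂ ⊗[ℤ] (W.baseChange Ksep).toAffine.Point,
      v ≠ 0 ∧ galoisStar K₀ Ksep W σ v = lam • v) :
    (Subgroup.zpowers (σ ^ n)).topologicalClosure.relIndex
      (Subgroup.zpowers σ).topologicalClosure = n := by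
  classical
  obtain ⟨v, hv0, hσv⟩ := hev
  haveI : NeZero n := ⟨hn.ne'⟩
  haveI : Algebra.IsSeparable K₀ Ksep := IsSepClosure.separable
  haveI : Algebra.IsIntegral K₀ Ksep := inferInstance
  set Cn := (Subgroup.zpowers (σ ^ n)).topologicalClosure with hCn
  set C := (Subgroup.zpowers σ).topologicalClosure with hC
  -- an open subgroup fixing `v`
  obtain ⟨s, hs⟩ := TensorProduct.exists_finset v
  choose Ef hEfd hEfix using fun p : {p // p ∈ s} => exists_fixing K₀ Ksep W p.1.2
  haveI : ∀ p, FiniteDimensional K₀ (Ef p) := hEfd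
  set E : IntermediateField K₀ Ksep := ⨆ p, Ef p with hE
  haveI : FiniteDimensional K₀ E := IntermediateField.finiteDimensional_iSup_of_finite
  set U := E.fixingSubgroup with hU
  have hUopen : IsOpen (U : Set (Ksep ≃ₐ[K₀] Ksep)) := E.fixingSubgroup_isOpen
  have hUfix : ∀ τ ∈ U, galoisStar K₀ Ksep W τ v = v := by
    intro τ hτ
    rw [hs, map_sum]
    refine Finset.sum_congr rfl fun p hp => ?_
    have hτp : τ ∈ (Ef ⟨p, hp⟩).fixingSubgroup :=
      IntermediateField.fixingSubgroup_antitone (le_iSup Ef ⟨p, hp⟩) hτ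
    have := hEfix ⟨p, hp⟩ τ hτp
    simp only [galoisStar, LinearMap.baseChange_tmul, AddMonoidHom.coe_toIntLinearMap, this]
  -- the subgroup fixing `v`
  set Fix : Subgroup (Ksep ≃ₐ[K₀] Ksep) :=
    { carrier := {τ : Ksep ≃ₐ[K₀] Ksep | galoisStar K₀ Ksep W τ v = v}
      one_mem' := galoisStar_one_apply K₀ Ksep W v
      mul_mem' := fun {a b} ha hb => by
        simp only [Set.mem_setOf_eq] at *
        rw [galoisStar_mul_apply, hb, ha]
      inv_mem' := fun {a} ha => by
        simp only [Set.mem_setOf_eq] at *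
        have h2 : galoisStar K₀ Ksep W a⁻¹ (galoisStar K₀ Ksep W a v) = v := by
          rw [← galoisStar_mul_apply, inv_mul_cancel, galoisStar_one_apply]
        rwa [ha] at h2 } with hFix
  have hpow : ∀ m : ℕ, galoisStar K₀ Ksep W (σ ^ m) v = lam ^ m • v := by
    intro m
    induction m with
    | zero => simpa using galoisStar_one_apply K₀ Ksep W v
    | succ m ih =>
        rw [pow_succ', pow_succ', galoisStar_mul_apply, ih, map_smul, hσv, smul_smul, mul_comm]
  have hσnFix : σ ^ n ∈ Fix := by
    show galoisStar K₀ Ksep W (σ ^ n) v = v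
    rw [hpow n, hlam.pow_eq_one, one_smul]
  have hCnFix : (Cn : Set (Ksep ≃ₐ[K₀] Ksep)) ⊆ (Fix : Set (Ksep ≃ₐ[K₀] Ksep)) := by
    rw [hCn, Subgroup.topologicalClosure_coe]
    refine (closure_subset_mul_open _ U hUopen).trans ?_
    rintro x ⟨a, ha, u, hu, rfl⟩
    obtain ⟨m, rfl⟩ := Subgroup.mem_zpowers_iff.mp ha
    refine Fix.mul_mem (Subgroup.zpow_mem Fix hσnFix m) (hUfix u hu)
  -- key: the only power `σ ^ k` with `k < n` lying in `Cn` is `k = 0`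
  have keyNat : ∀ k : ℕ, k < n → σ ^ k ∈ Cn → k = 0 := by
    intro k hk hkCn
    have h1 : galoisStar K₀ Ksep W (σ ^ k) v = v := hCnFix hkCn
    rw [hpow k] at h1
    have h2 : (lam ^ k - 1) • v = 0 := by rw [sub_smul, one_smul, h1, sub_self]
    have h3 : lam ^ k = 1 := by
      by_contra hne
      have hc : lam ^ k - 1 ≠ 0 := sub_ne_zero.mpr hne
      exact hv0 (by
        calc v = (lam ^ k - 1)⁻¹ • ((lam ^ k - 1) • v) := by
                rw [smul_smul, inv_mul_cancel₀ hc, one_smul]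
          _ = 0 := by rw [h2, smul_zero])
    have hdvd : n ∣ k := (hlam.pow_eq_one_iff_dvd k).mp h3
    exact Nat.eq_zero_of_dvd_of_lt hdvd hk
  -- covering: `C` is contained in the union of the cosets `σ ^ i • Cn`, `i < n`
  set T : Set (Ksep ≃ₐ[K₀] Ksep) :=
    ⋃ i ∈ Finset.range n, (σ ^ i) • (Cn : Set (Ksep ≃ₐ[K₀] Ksep)) with hT
  have hTclosed : IsClosed T := by
    refine Set.Finite.isClosed_biUnion (Finset.finite_toSet _) fun i _ => ?_
    exact (Subgroup.isClosed_topologicalClosure _).smul _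
  have hzsub : (Subgroup.zpowers σ : Set (Ksep ≃ₐ[K₀] Ksep)) ⊆ T := by
    rintro x hx
    obtain ⟨m, rfl⟩ := Subgroup.mem_zpowers_iff.mp hx
    have hn0 : (n : ℤ) ≠ 0 := Int.natCast_ne_zero.mpr hn.ne'
    have hr0 : 0 ≤ m % (n : ℤ) := Int.emod_nonneg m hn0
    have hrlt : m % (n : ℤ) < n := Int.emod_lt_of_pos m (Int.natCast_pos.mpr hn)
    set r : ℕ := (m % (n : ℤ)).toNat with hrdef
    have hrn : r < n := by omega
    have hrz : (r : ℤ) = m % (n : ℤ) := Int.toNat_of_nonneg hr0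
    have hdecomp : σ ^ m = σ ^ r * (σ ^ n) ^ (m / (n : ℤ)) := by
      have h1 : σ ^ m = σ ^ (m % (n : ℤ)) * σ ^ ((n : ℤ) * (m / (n : ℤ))) := by
        rw [← zpow_add, Int.emod_add_mul_ediv m (n : ℤ)]
      rw [h1, ← hrz, zpow_natCast, zpow_mul, zpow_natCast]
    refine Set.mem_biUnion (Finset.mem_range.mpr hrn) ?_
    refine ⟨(σ ^ n) ^ (m / (n : ℤ)), ?_, ?_⟩
    · exact Subgroup.le_topologicalClosure _
        (Subgroup.mem_zpowers_iff.mpr ⟨m / (n : ℤ), rfl⟩)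
    · show σ ^ r * (σ ^ n) ^ (m / (n : ℤ)) = σ ^ m
      exact hdecomp.symm
  have hCsub : (C : Set (Ksep ≃ₐ[K₀] Ksep)) ⊆ T := by
    rw [hC, Subgroup.topologicalClosure_coe]
    exact closure_minimal hzsub hTclosed
  -- the bijection `ZMod n ≃ C ⧸ Cn.subgroupOf C`
  have hσC : σ ∈ C := Subgroup.le_topologicalClosure _ (Subgroup.mem_zpowers σ)
  have hσpC : ∀ i : ℕ, σ ^ i ∈ C := fun i => pow_mem hσC i
  set f : ZMod n → (↥C ⧸ (Cn.subgroupOf C)) :=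
    fun i => QuotientGroup.mk ⟨σ ^ i.val, hσpC i.val⟩ with hf
  have hinj : Function.Injective f := by
    have main : ∀ i j : ZMod n, i.val ≤ j.val → f i = f j → i = j := by
      intro i j hij hfij
      rw [hf] at hfij
      rw [QuotientGroup.eq, Subgroup.mem_subgroupOf] at hfij
      have hcoe : (((⟨σ ^ i.val, hσpC i.val⟩ : ↥C)⁻¹ * ⟨σ ^ j.val, hσpC j.val⟩ :
          ↥C) : Ksep ≃ₐ[K₀] Ksep) = (σ ^ i.val)⁻¹ * σ ^ j.val := rfl
      rw [hcoe] at hfij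
      have heq : (σ ^ i.val)⁻¹ * σ ^ j.val = σ ^ (j.val - i.val) := by
        have hj : σ ^ j.val = σ ^ i.val * σ ^ (j.val - i.val) := by
          rw [← pow_add]; congr 1; omega
        rw [hj, inv_mul_cancel_left]
      rw [heq] at hfij
      have h0 : j.val - i.val = 0 :=
        keyNat _ (lt_of_le_of_lt (Nat.sub_le _ _) (ZMod.val_lt j)) hfij
      have : i.val = j.val := le_antisymm hij (by omega)
      exact ZMod.val_injective n this
    intro i j h
    rcases le_total i.val j.val with hle | hle
    · exact main i j hle h
    · exact (main j i hle h.symm).symm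
  have hsurj : Function.Surjective f := by
    intro q
    induction q using QuotientGroup.induction_on with
    | H x =>
        obtain ⟨x, hxC⟩ := x
        have hxT := hCsub hxC
        rw [hT] at hxT
        simp only [Set.mem_iUnion, Finset.mem_range, Set.mem_smul_set] at hxT
        obtain ⟨i, hi, y, hyCn, hyx⟩ := hxT
        refine ⟨(i : ZMod n), ?_⟩
        rw [hf, QuotientGroup.eq, Subgroup.mem_subgroupOf]
        show (σ ^ ((i : ZMod n)).val)⁻¹ * x ∈ Cn
        rw [ZMod.val_cast_of_lt hi]
        have hxy : (σ ^ i)⁻¹ * x = y := by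
          rw [← hyx, smul_eq_mul, inv_mul_cancel_left]
        rw [hxy]
        exact hyCn
  have hcard : Nat.card (↥C ⧸ (Cn.subgroupOf C)) = n := by
    rw [← Nat.card_zmod n]
    exact (Nat.card_eq_of_bijective f ⟨hinj, hsurj⟩).symm
  show Cn.relIndex C = n
  rw [Subgroup.relIndex, Subgroup.index]
  exact hcard
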